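/- Let F have finite second moment and weights w_i ∈ {0,1} be such that w_i = 0 for all contaminated instances and w_i = 1 for at least a fixed positive fraction q > 0 (asymptotically) of the ideal instances, chosen independently of the values Y_i. Then (Σ_i w_i (Y_i - μ)^2)/(Σ_i w_i) still converges almost surely to E_F[(Y - μ)^2], so discarding some clean instances along with all contaminated ones only slows convergence but preserves strict consistency of the squared loss for E_F[Y]. -/

import Mathlib

open MeasureTheory ProbabilityTheory Filter Finset
open scoped ENNReal Topology

theorem aux_sum_reindex (v : ℕ → ℝ) (hv : ∀ i, v i = 0 ∨ v i = 1)
    (hinf : (setOf fun i => v i = 1).Infinite) (a : ℕ → ℝ) (n : ℕ) :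
    ∑ i ∈ range n, v i * a i
      = ∑ k ∈ range (Nat.count (fun i => v i = 1) n), a (Nat.nth (fun i => v i = 1) k) := by
  classical
  set p := fun i => v i = 1 with hp
  have h1 : ∑ i ∈ range n, v i * a i = ∑ i ∈ (range n).filter p, a i := by
    rw [← Finset.sum_filter_add_sum_filter_not (range n) p (fun i => v i * a i)]
    have hz : ∑ i ∈ (range n).filter (fun i => ¬ p i), v i * a i = 0 := by
      apply Finset.sum_eq_zero
      intro i hi
      rcases hv i with h | h
      · rw [h]; ring
      · exact absurd h (Finset.mem_filter.mp hi).2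
    rw [hz, add_zero]
    apply Finset.sum_congr rfl
    intro i hi
    rw [(Finset.mem_filter.mp hi).2]; ring
  rw [h1]
  apply Finset.sum_nbij' (fun i => Nat.count p i) (fun k => Nat.nth p k)
  · intro i hi
    obtain ⟨hin, hpi⟩ := Finset.mem_filter.mp hi
    exact Finset.mem_range.mpr (Nat.count_strict_mono hpi (Finset.mem_range.mp hin))
  · intro k hk
    rw [Finset.mem_range] at hk
    have hk' : Nat.nth p k < n := (Nat.lt_nth_iff_count_lt hinf).mp hk
    exact Finset.mem_filter.mpr ⟨Finset.mem_range.mpr hk', Nat.nth_mem_of_infinite hinf k⟩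
  · intro i hi; exact Nat.nth_count (Finset.mem_filter.mp hi).2
  · intro k _; exact Nat.count_nth_of_infinite hinf k
  · intro i hi; rw [Nat.nth_count (Finset.mem_filter.mp hi).2]

theorem aux_sum_count (v : ℕ → ℝ) (hv : ∀ i, v i = 0 ∨ v i = 1)
    (hinf : (setOf fun i => v i = 1).Infinite) (n : ℕ) :
    ∑ i ∈ range n, v i = (Nat.count (fun i => v i = 1) n : ℝ) := by
  have := aux_sum_reindex v hv hinf (fun _ => 1) n
  simpa using this

theorem aux_infinite (v : ℕ → ℝ) (hv : ∀ i, v i = 0 ∨ v i = 1) (c : ℝ) (hc : 0 < c)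
    (hfrac : Tendsto (fun n : ℕ => (n : ℝ)⁻¹ * ∑ i ∈ range n, v i) atTop (𝓝 c)) :
    (setOf fun i => v i = 1).Infinite := by
  classical
  by_contra hni
  rw [Set.not_infinite] at hni
  have hfin := hni
  set C : ℝ := (hfin.toFinset.card : ℝ) with hC
  have hbound : ∀ n : ℕ, ∑ i ∈ range n, v i ≤ C := by
    intro n
    have h1 : ∑ i ∈ range n, v i ≤ ∑ i ∈ (range n).filter (fun i => v i = 1), 1 := by
      rw [← Finset.sum_filter_add_sum_filter_not (range n) (fun i => v i = 1) v]
      have hz : ∑ i ∈ (range n).filter (fun i => ¬ v i = 1), v i ≤ 0 := by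
        apply Finset.sum_nonpos
        intro i hi
        rcases hv i with h | h
        · rw [h]
        · exact absurd h (Finset.mem_filter.mp hi).2
      have he : ∑ i ∈ (range n).filter (fun i => v i = 1), v i
          = ∑ i ∈ (range n).filter (fun i => v i = 1), (1:ℝ) :=
        Finset.sum_congr rfl fun i hi => (Finset.mem_filter.mp hi).2
      linarith
    have h2 : ((range n).filter (fun i => v i = 1)).card ≤ hfin.toFinset.card := by
      apply Finset.card_le_card
      intro i hi
      rw [Set.Finite.mem_toFinset]
      exact (Finset.mem_filter.mp hi).2
    calc ∑ i ∈ range n, v i ≤ _ := h1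
      _ = ((range n).filter (fun i => v i = 1)).card := by simp
      _ ≤ C := by rw [hC]; exact_mod_cast h2
  have hnn : ∀ n : ℕ, 0 ≤ (n : ℝ)⁻¹ * ∑ i ∈ range n, v i := by
    intro n
    apply mul_nonneg (by positivity)
    apply Finset.sum_nonneg
    intro i _
    rcases hv i with h | h <;> rw [h] <;> norm_num
  have hle : ∀ n : ℕ, (n : ℝ)⁻¹ * ∑ i ∈ range n, v i ≤ (n : ℝ)⁻¹ * C := fun n =>
    mul_le_mul_of_nonneg_left (hbound n) (by positivity)
  have hg : Tendsto (fun n : ℕ => (n : ℝ)⁻¹ * C) atTop (𝓝 0) := by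
    have := tendsto_inv_atTop_nhds_zero_nat.mul_const C
    simpa using this
  have h0 : Tendsto (fun n : ℕ => (n : ℝ)⁻¹ * ∑ i ∈ range n, v i) atTop (𝓝 0) :=
    squeeze_zero hnn hle hg
  exact absurd (tendsto_nhds_unique hfrac h0) (ne_of_gt hc)

theorem aux_core {Ω : Type*} [MeasurableSpace Ω] (P : Measure Ω) [IsProbabilityMeasure P]
    (F : Measure ℝ) [IsProbabilityMeasure F]
    (f : ℝ → ℝ) (hfm : Measurable f) (hfi : Integrable f F)
    (X : ℕ → Ω → ℝ) (hXm : ∀ i, Measurable (X i))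
    (hXlaw : ∀ i, Measure.map (X i) P = F)
    (hXindep : iIndepFun X P)
    (v : ℕ → ℝ) (hv : ∀ i, v i = 0 ∨ v i = 1)
    (hinf : (setOf fun i => v i = 1).Infinite) :
    ∀ᵐ ω ∂P, Tendsto
      (fun n : ℕ => (∑ i ∈ range n, v i * f (X i ω)) / (∑ i ∈ range n, v i))
      atTop (𝓝 (∫ y, f y ∂F)) := by
  classical
  set p := fun i => v i = 1 with hp
  set Z : ℕ → Ω → ℝ := fun k ω => f (X (Nat.nth p k) ω) with hZ
  have hZm : ∀ k, Measurable (Z k) := fun k => hfm.comp (hXm _)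
  have hident : ∀ k, IdentDistrib (Z k) (Z 0) P P := by
    intro k
    have h1 : IdentDistrib (X (Nat.nth p k)) (X (Nat.nth p 0)) P P :=
      ⟨(hXm _).aemeasurable, (hXm _).aemeasurable, by rw [hXlaw, hXlaw]⟩
    exact h1.comp hfm
  have hint : Integrable (Z 0) P := by
    have h0 : Integrable f (Measure.map (X (Nat.nth p 0)) P) := by rw [hXlaw]; exact hfi
    have := (integrable_map_measure (by rw [hXlaw]; exact hfi.1) (hXm (Nat.nth p 0)).aemeasurable).mp h0
    exact this
  have hpair : Pairwise (Function.onFun (IndepFun · · P) Z) := by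
    intro k l hkl
    exact ((hXindep.indepFun (fun h => hkl (Nat.nth_injective hinf h))).comp hfm hfm)
  have hEZ : (∫ ω, Z 0 ω ∂P) = ∫ y, f y ∂F := by
    rw [← hXlaw (Nat.nth p 0), integral_map (hXm _).aemeasurable]
    rw [hXlaw]
    exact hfi.1
  have hslln := strong_law_ae_real Z hint hpair hident
  rw [hEZ] at hslln
  have hm : Tendsto (fun n => Nat.count p n) atTop atTop := by
    apply tendsto_atTop_atTop_of_monotone (Nat.count_monotone p)
    intro K
    refine ⟨Nat.nth p K + 1, ?_⟩
    rw [Nat.count_nth_succ_of_infinite hinf]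
    omega
  filter_upwards [hslln] with ω hω
  have key : ∀ n : ℕ, (∑ i ∈ range n, v i * f (X i ω)) / (∑ i ∈ range n, v i)
      = (fun K : ℕ => (∑ k ∈ range K, Z k ω) / K) (Nat.count p n) := by
    intro n
    simp only []
    rw [aux_sum_reindex v hv hinf (fun i => f (X i ω)) n, aux_sum_count v hv hinf n]
  have := hω.comp hm
  refine Tendsto.congr (fun n => (key n).symm) this


theorem aux_integrable (F : Measure ℝ) [IsProbabilityMeasure F]
    (hF2 : Integrable (fun y => y ^ 2) F) (μ : ℝ) :
    Integrable (fun y => (y - μ) ^ 2) F := by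
  have h2 : MemLp (fun y : ℝ => y) 2 F :=
    (memLp_two_iff_integrable_sq aestronglyMeasurable_id).mpr hF2
  have h1 : Integrable (fun y : ℝ => y) F :=
    memLp_one_iff_integrable.mp (h2.mono_exponent one_le_two)
  have : (fun y : ℝ => (y - μ) ^ 2) = fun y => y ^ 2 - (2 * μ) * y + μ ^ 2 := by
    funext y; ring
  rw [this]
  exact (hF2.sub (h1.const_mul (2 * μ))).add (integrable_const _)

/-- Convex-contamination setting with {0,1}-valued weights that vanish on every
contaminated instance, are chosen independently of the ideal (F-component) values,
and keep asymptotically a positive fraction q(1-r) > 0 of the data.  Then the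
weighted empirical squared-loss risk still converges almost surely to E_F[(Y-μ)²],
so strict consistency of the squared loss for E_F[Y] is preserved. -/
theorem partial_trimming_preserves_consistency
    {Ω : Type*} [MeasurableSpace Ω] (P : Measure Ω) [IsProbabilityMeasure P]
    (F G : Measure ℝ) [IsProbabilityMeasure F] [IsProbabilityMeasure G]
    (hF2 : Integrable (fun y => y ^ 2) F)
    (r : ℝ≥0∞) (hr : r ≤ 1) (hr1 : r < 1)
    (D : ℕ → Ω → ℝ × ℝ × Bool)
    (hmeas : ∀ i, Measurable (D i))
    (hlaw : ∀ i, Measure.map (D i) P = F.prod (G.prod ((PMF.bernoulli r.toNNReal (by simpa using ENNReal.toNNReal_mono ENNReal.one_ne_top hr)).toMeasure)))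
    (hindep : iIndepFun D P)
    (Y : ℕ → Ω → ℝ)
    (hY : ∀ i ω, Y i ω = if (D i ω).2.2 then (D i ω).2.1 else (D i ω).1)
    (w : ℕ → Ω → ℝ) (hwmeas : ∀ i, Measurable (w i))
    (hw01 : ∀ i ω, w i ω = 0 ∨ w i ω = 1)
    (hwB : ∀ i ω, (D i ω).2.2 = true → w i ω = 0)
    (hwindep : IndepFun (fun ω => fun i => w i ω) (fun ω => fun i => (D i ω).1) P)
    (q : ℝ) (hq : 0 < q)
    (hfrac : ∀ᵐ ω ∂P, Tendsto
      (fun n : ℕ => (n : ℝ)⁻¹ * ∑ i ∈ Finset.range n, w i ω)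
      atTop (𝓝 (q * (1 - r.toReal)))) :
    ∀ μ : ℝ, ∀ᵐ ω ∂P, Tendsto
      (fun n : ℕ => (∑ i ∈ Finset.range n, w i ω * (Y i ω - μ) ^ 2) /
        (∑ i ∈ Finset.range n, w i ω))
      atTop (𝓝 (∫ y, (y - μ) ^ 2 ∂F)) := by
  intro μ
  classical
  have hfm : Measurable (fun y : ℝ => (y - μ) ^ 2) :=
    (measurable_id.sub_const μ).pow_const 2
  have hfi : Integrable (fun y : ℝ => (y - μ) ^ 2) F := aux_integrable F hF2 μ
  have hrtop : r ≠ ⊤ := hr1.ne_top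
  have hrlt : r.toReal < 1 := by
    have := (ENNReal.toReal_lt_toReal hrtop ENNReal.one_ne_top).mpr hr1
    simpa using this
  have hc : 0 < q * (1 - r.toReal) := mul_pos hq (by linarith)
  have hXm : ∀ i, Measurable (fun ω => (D i ω).1) := fun i => measurable_fst.comp (hmeas i)
  have hXlaw : ∀ i, Measure.map (fun ω => (D i ω).1) P = F := by
    intro i
    have h1 : (fun ω => (D i ω).1) = Prod.fst ∘ D i := rfl
    rw [h1, ← Measure.map_map measurable_fst (hmeas i), hlaw i, Measure.map_fst_prod]
    simp
  have hXindep : iIndepFun (fun i ω => (D i ω).1) P :=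
    hindep.comp (fun _ => Prod.fst) (fun _ => measurable_fst)
  have hWm : Measurable (fun ω => fun i => w i ω) := measurable_pi_lambda _ hwmeas
  have hXXm : Measurable (fun ω => fun i => (D i ω).1) := measurable_pi_lambda _ hXm
  have hPW : IsProbabilityMeasure (P.map (fun ω => fun i => w i ω)) :=
    Measure.isProbabilityMeasure_map hWm.aemeasurable
  have hPX : IsProbabilityMeasure (P.map (fun ω => fun i => (D i ω).1)) :=
    Measure.isProbabilityMeasure_map hXXm.aemeasurable
  have hmap : P.map (fun ω => (fun i => w i ω, fun i => (D i ω).1))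
      = (P.map (fun ω => fun i => w i ω)).prod (P.map (fun ω => fun i => (D i ω).1)) :=
    (indepFun_iff_map_prod_eq_prod_map_map hWm.aemeasurable hXXm.aemeasurable).mp hwindep
  have hTm : MeasurableSet {x : (ℕ → ℝ) × (ℕ → ℝ) | Tendsto
      (fun n : ℕ => (∑ i ∈ Finset.range n, x.1 i * (x.2 i - μ) ^ 2) /
        (∑ i ∈ Finset.range n, x.1 i)) atTop (𝓝 (∫ y, (y - μ) ^ 2 ∂F))} := by
    apply measurableSet_tendsto
    intro n
    apply Measurable.div
    · exact Finset.measurable_sum _ fun i _ =>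
        ((measurable_pi_apply i).comp measurable_fst).mul
          (hfm.comp ((measurable_pi_apply i).comp measurable_snd))
    · exact Finset.measurable_sum _ fun i _ => (measurable_pi_apply i).comp measurable_fst
  suffices h : ∀ᵐ ω ∂P, Tendsto
      (fun n : ℕ => (∑ i ∈ Finset.range n, w i ω * ((D i ω).1 - μ) ^ 2) /
        (∑ i ∈ Finset.range n, w i ω)) atTop (𝓝 (∫ y, (y - μ) ^ 2 ∂F)) by
    filter_upwards [h] with ω hω
    refine hω.congr fun n => ?_
    have hterm : ∀ i, w i ω * ((D i ω).1 - μ) ^ 2 = w i ω * (Y i ω - μ) ^ 2 := by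
      intro i
      by_cases hb : (D i ω).2.2 = true
      · rw [hwB i ω hb]; ring
      · rw [hY i ω, if_neg hb]
    rw [Finset.sum_congr rfl fun i _ => hterm i]
  have goal2 : ∀ᵐ x ∂((P.map (fun ω => fun i => w i ω)).prod
      (P.map (fun ω => fun i => (D i ω).1))), Tendsto
      (fun n : ℕ => (∑ i ∈ Finset.range n, x.1 i * (x.2 i - μ) ^ 2) /
        (∑ i ∈ Finset.range n, x.1 i)) atTop (𝓝 (∫ y, (y - μ) ^ 2 ∂F)) := by
    rw [Measure.ae_prod_iff_ae_ae hTm]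
    have h01m : MeasurableSet {v : ℕ → ℝ | ∀ i, v i = 0 ∨ v i = 1} := by
      have he : {v : ℕ → ℝ | ∀ i, v i = 0 ∨ v i = 1}
          = ⋂ i, (fun v : ℕ → ℝ => v i) ⁻¹' {0, 1} := by
        ext v
        simp [Set.mem_iInter, Set.mem_insert_iff]
      rw [he]
      exact MeasurableSet.iInter fun i =>
        (measurableSet_insert.mpr (measurableSet_singleton 1)).preimage (measurable_pi_apply i)
    have h01 : ∀ᵐ v ∂(P.map (fun ω => fun i => w i ω)), ∀ i, v i = 0 ∨ v i = 1 := by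
      rw [ae_map_iff hWm.aemeasurable h01m]
      exact Filter.Eventually.of_forall (fun ω i => hw01 i ω)
    have hfrm : MeasurableSet {v : ℕ → ℝ | Tendsto
        (fun n : ℕ => (n : ℝ)⁻¹ * ∑ i ∈ Finset.range n, v i) atTop
        (𝓝 (q * (1 - r.toReal)))} := by
      apply measurableSet_tendsto
      intro n
      exact (Finset.measurable_sum _ fun i _ => measurable_pi_apply i).const_mul _
    have hfr : ∀ᵐ v ∂(P.map (fun ω => fun i => w i ω)), Tendsto
        (fun n : ℕ => (n : ℝ)⁻¹ * ∑ i ∈ Finset.range n, v i) atTop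
        (𝓝 (q * (1 - r.toReal))) := by
      rw [ae_map_iff hWm.aemeasurable hfrm]
      exact hfrac
    filter_upwards [h01, hfr] with v hv hvf
    have hinf : (setOf fun i => v i = 1).Infinite :=
      aux_infinite v hv _ hc hvf
    have hsm : MeasurableSet {x : ℕ → ℝ | Tendsto
        (fun n : ℕ => (∑ i ∈ Finset.range n, v i * (x i - μ) ^ 2) /
          (∑ i ∈ Finset.range n, v i)) atTop (𝓝 (∫ y, (y - μ) ^ 2 ∂F))} := by
      apply measurableSet_tendsto
      intro n
      exact (Finset.measurable_sum _ fun i _ =>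
        (hfm.comp (measurable_pi_apply i)).const_mul _).div_const _
    rw [ae_map_iff hXXm.aemeasurable hsm]
    exact aux_core P F (fun y => (y - μ) ^ 2) hfm hfi (fun i ω => (D i ω).1)
      hXm hXlaw hXindep v hv hinf
  rw [← hmap] at goal2
  rw [ae_map_iff ((hWm.prodMk hXXm)).aemeasurable hTm] at goal2
  exact goal2
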